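/- Let J be the block matrix [[H, G],[Λ Gᵀ, D]] where H ∈ ℝ^{n×n} is symmetric positive definite, G ∈ ℝ^{n×m}, Λ = diag(λ₁,…,λₘ) with λᵢ ≥ 0, and D = diag(d₁,…,dₘ) with dᵢ ≤ 0, such that for every i either λᵢ > 0 or dᵢ < 0 (strict complementarity), and the columns of G corresponding to indices with λᵢ > 0 are linearly independent. Then the Schur complement M = D - Λ Gᵀ H⁻¹ G is invertible, and consequently J is invertible. -/

import Mathlib

open scoped Matrix
open Matrix

/-- Lemma 2 of the paper: for the block matrix `J = [[H, G],[ΛGᵀ, D]]` with `H`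
symmetric positive definite, `Λ = diag lam` with `lam ≥ 0`, `D = diag d` with
`d ≤ 0`, strict complementarity (`lam i > 0` or `d i < 0` for each `i`), and the
columns of `G` with `lam i > 0` linearly independent, the Schur complement
`M = D - Λ Gᵀ H⁻¹ G` is invertible and hence `J` is invertible. -/
theorem schur_and_block_invertible {n m : ℕ}
    (H : Matrix (Fin n) (Fin n) ℝ) (hH : H.PosDef) (hHsymm : H.IsSymm)
    (G : Matrix (Fin n) (Fin m) ℝ) (lam d : Fin m → ℝ)
    (hlam : ∀ i, 0 ≤ lam i) (hd : ∀ i, d i ≤ 0)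
    (hcompl : ∀ i, 0 < lam i ∨ d i < 0)
    (hindep : LinearIndependent ℝ (fun i : {i : Fin m // 0 < lam i} =>
      (fun j : Fin n => G j i.1))) :
    IsUnit (Matrix.diagonal d
        - Matrix.diagonal lam * Gᵀ * H⁻¹ * G).det ∧
      IsUnit (Matrix.fromBlocks H G (Matrix.diagonal lam * Gᵀ)
        (Matrix.diagonal d)).det := by
  have hdetH : IsUnit H.det := isUnit_iff_ne_zero.mpr (ne_of_gt hH.det_pos)
  have hInv : Invertible H := H.invertibleOfIsUnitDet hdetH
  set K : Matrix (Fin m) (Fin m) ℝ := Gᵀ * H⁻¹ * G with hKdef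
  set M : Matrix (Fin m) (Fin m) ℝ := diagonal d - diagonal lam * K with hMdef
  have hMeq : diagonal d - diagonal lam * Gᵀ * H⁻¹ * G = M := by
    simp only [hMdef, hKdef, Matrix.mul_assoc]
  have hdetM : M.det ≠ 0 := by
    intro h0
    obtain ⟨x, hx0, hx⟩ := (Matrix.exists_mulVec_eq_zero_iff).mpr h0
    -- row equations
    have hrow : ∀ i, d i * x i = lam i * (K *ᵥ x) i := by
      intro i
      have := congrFun hx i
      simp only [hMdef, Matrix.sub_mulVec, ← Matrix.mulVec_mulVec,
        Matrix.mulVec_diagonal, Pi.sub_apply, Pi.zero_apply] at this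
      linarith
    have hz : ∀ i, lam i = 0 → x i = 0 := by
      intro i h0i
      have hdlt : d i < 0 := (hcompl i).resolve_left (by simp [h0i])
      have hri := hrow i
      rw [h0i, zero_mul] at hri
      rcases mul_eq_zero.mp hri with h | h
      · exact absurd h (ne_of_lt hdlt)
      · exact h
    -- quadratic form
    have hq : x ⬝ᵥ (K *ᵥ x) = (G *ᵥ x) ⬝ᵥ (H⁻¹ *ᵥ (G *ᵥ x)) := by
      rw [hKdef, Matrix.mul_assoc, ← Matrix.mulVec_mulVec,
        Matrix.dotProduct_mulVec, Matrix.vecMul_transpose, ← Matrix.mulVec_mulVec]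
    have hqle : x ⬝ᵥ (K *ᵥ x) ≤ 0 := by
      apply Finset.sum_nonpos
      intro i _
      rcases eq_or_lt_of_le (hlam i) with h | h
      · simp [hz i h.symm]
      · have hri := hrow i
        have h1 : lam i * (x i * (K *ᵥ x) i) ≤ 0 := by
          have : lam i * (x i * (K *ᵥ x) i) = d i * (x i) ^ 2 := by
            rw [show lam i * (x i * (K *ᵥ x) i) = x i * (lam i * (K *ᵥ x) i) by ring,
              ← hri]; ring
          rw [this]
          exact mul_nonpos_of_nonpos_of_nonneg (hd i) (sq_nonneg _)
        nlinarith [h1]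
    have hGx : G *ᵥ x = 0 := by
      by_contra hne
      have hpos := (Matrix.posDef_iff_dotProduct_mulVec.mp hH.inv).2 hne
      simp only [star_trivial] at hpos
      rw [hq] at hqle
      linarith
    -- linear independence
    have hsum : ∑ i : {i : Fin m // 0 < lam i},
        x i.1 • (fun j : Fin n => G j i.1) = (0 : Fin n → ℝ) := by
      funext j
      have h1 : ∑ i : {i : Fin m // 0 < lam i}, x i.1 * G j i.1
          = ∑ i ∈ Finset.univ.filter (fun i => 0 < lam i), x i * G j i :=
        (Finset.sum_subtype (Finset.univ.filter (fun i => 0 < lam i))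
          (fun i => by simp [Finset.mem_filter]) (fun i => x i * G j i)).symm
      have h2 : ∑ i ∈ Finset.univ.filter (fun i => 0 < lam i), x i * G j i
          = ∑ i : Fin m, x i * G j i := by
        apply Finset.sum_subset (Finset.filter_subset _ _)
        intro i _ hni
        simp only [Finset.mem_filter, Finset.mem_univ, true_and, not_lt] at hni
        have : lam i = 0 := le_antisymm hni (hlam i)
        simp [hz i this]
      have h3 : ∑ i : Fin m, x i * G j i = (G *ᵥ x) j := by
        simp [Matrix.mulVec, dotProduct, mul_comm]
      simp only [Finset.sum_apply, Pi.smul_apply, smul_eq_mul, Pi.zero_apply]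
      rw [h1, h2, h3, hGx]
      rfl
    have hzero := Fintype.linearIndependent_iff.mp hindep (fun i => x i.1) hsum
    apply hx0
    funext i
    rcases eq_or_lt_of_le (hlam i) with h | h
    · exact hz i h.symm
    · exact hzero ⟨i, h⟩
  constructor
  · rw [hMeq]; exact isUnit_iff_ne_zero.mpr hdetM
  · rw [Matrix.det_fromBlocks₁₁, Matrix.invOf_eq_nonsing_inv]
    exact hdetH.mul (isUnit_iff_ne_zero.mpr (hMeq ▸ hdetM))
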